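/- Let X be a standard Borel space. The max-union map (D₁, D₂) ↦ D₁ ∪ D₂ (the multiset union, in which the multiplicity of each element is the maximum of its multiplicities in D₁ and D₂) from Multiset X × Multiset X to Multiset X is measurable, where Multiset X carries the counting σ-algebra and Multiset X × Multiset X the corresponding product σ-algebra. -/

import Mathlib

/- `countIn D E` is the number of elements of the finite multiset `D` lying in the set `E`,
counted with multiplicity. -/
open Classical in
noncomputable def countIn {X : Type*} (D : Multiset X) (E : Set X) : ℕ :=
  (D.filter (· ∈ E)).card

/-- The counting σ-algebra on the space of finite multisets over a measurable space `X`: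
generated by the counting events `C(E,n) = {D | countIn D E = n}` for `E` measurable, `n : ℕ`. -/
def countingMS (X : Type*) [MeasurableSpace X] : MeasurableSpace (Multiset X) :=
  MeasurableSpace.generateFrom
    {C : Set (Multiset X) |
      ∃ (E : Set X) (n : ℕ), MeasurableSet E ∧ C = {D : Multiset X | countIn D E = n}}

open Classical MeasureTheory ENNReal
open scoped ENNReal

namespace MaxUnionAux

variable {X : Type*}

lemma countIn_mono {D D' : Multiset X} (h : D ≤ D') (E : Set X) :
    countIn D E ≤ countIn D' E :=
  Multiset.card_le_card (Multiset.filter_le_filter _ h)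

lemma countIn_cons (a : X) (D : Multiset X) (E : Set X) :
    countIn (a ::ₘ D) E = countIn D E + (if a ∈ E then 1 else 0) := by
  by_cases h : a ∈ E <;>
    simp [countIn, Multiset.filter_cons_of_pos, Multiset.filter_cons_of_neg, h, add_comm]

lemma measurable_countIn {X : Type*} [MeasurableSpace X] {E : Set X} (hE : MeasurableSet E) :
    @Measurable _ _ (countingMS X) _ (fun D : Multiset X => countIn D E) := by
  letI := countingMS X
  exact measurable_to_countable' fun n =>
    MeasurableSpace.measurableSet_generateFrom ⟨E, n, hE, rfl⟩

lemma tsum_countIn (D : Multiset X) (E : Set X) (P : ℤ → Set X)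
    (hP : ∀ x, ∃! k, x ∈ P k) :
    ∑' k : ℤ, (countIn D (E ∩ P k) : ℝ≥0∞) = countIn D E := by
  induction D using Multiset.induction_on with
  | empty => simp [countIn]
  | cons a D ih =>
    simp only [countIn_cons]
    push_cast
    rw [ENNReal.tsum_add, ih]
    congr 1
    obtain ⟨k₀, hk₀, hu⟩ := hP a
    by_cases haE : a ∈ E
    · rw [tsum_eq_single k₀]
      · simp [haE, hk₀]
      · intro k hk
        have : a ∉ E ∩ P k := fun h => hk (hu k h.2)
        simp [this]
    · have : ∀ k : ℤ, a ∉ E ∩ P k := fun k h => haE h.1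
      simp [this, haE]

lemma countIn_union_of_subsingleton (D₁ D₂ : Multiset X) (S : Set X)
    (h : ∀ a ∈ D₁ ∪ D₂, ∀ b ∈ D₁ ∪ D₂, a ∈ S → b ∈ S → a = b) :
    countIn (D₁ ∪ D₂) S = max (countIn D₁ S) (countIn D₂ S) := by
  by_cases hex : ∃ x ∈ D₁ ∪ D₂, x ∈ S
  · obtain ⟨x, hxD, hxS⟩ := hex
    have key : ∀ D : Multiset X, D ≤ D₁ ∪ D₂ → countIn D S = D.count x := by
      intro D hD
      unfold countIn
      rw [Multiset.count_eq_card_filter_eq]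
      congr 1
      apply Multiset.filter_congr
      intro b hb
      constructor
      · intro hbS
        exact (h b (Multiset.mem_of_le hD hb) x hxD hbS hxS).symm
      · rintro rfl
        exact hxS
    rw [key _ le_rfl, key _ Multiset.le_union_left,
      key _ Multiset.le_union_right, Multiset.count_union]
  · push_neg at hex
    have z : ∀ D : Multiset X, D ≤ D₁ ∪ D₂ → countIn D S = 0 := by
      intro D hD
      unfold countIn
      rw [Multiset.card_eq_zero, Multiset.filter_eq_nil]
      exact fun a ha => hex a (Multiset.mem_of_le hD ha)
    rw [z _ le_rfl, z _ Multiset.le_union_left, z _ Multiset.le_union_right]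
    simp

lemma exists_separating (T : Finset ℝ) :
    ∃ m : ℕ, ∀ a ∈ T, ∀ b ∈ T, ⌊a * 2 ^ m⌋ = ⌊b * 2 ^ m⌋ → a = b := by
  have hch : ∀ p : ℝ × ℝ, ∃ m : ℕ, p.1 ≠ p.2 → 1 < |p.1 - p.2| * 2 ^ m := by
    intro p
    by_cases h : p.1 = p.2
    · exact ⟨0, fun hc => absurd h hc⟩
    · have hpos : 0 < |p.1 - p.2| := abs_pos.2 (sub_ne_zero.2 h)
      obtain ⟨m, hm⟩ := pow_unbounded_of_one_lt (1 / |p.1 - p.2|) (by norm_num : (1:ℝ) < 2)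
      refine ⟨m, fun _ => ?_⟩
      rw [div_lt_iff₀ hpos] at hm
      calc (1:ℝ) < 2 ^ m * |p.1 - p.2| := hm
        _ = |p.1 - p.2| * 2 ^ m := mul_comm _ _
  choose g hg using hch
  refine ⟨(T ×ˢ T).sup g, ?_⟩
  intro a ha b hb hfloor
  by_contra hne
  have hmem : (a, b) ∈ T ×ˢ T := Finset.mem_product.2 ⟨ha, hb⟩
  have hle : g (a, b) ≤ (T ×ˢ T).sup g := Finset.le_sup hmem
  have h1 : 1 < |a - b| * 2 ^ g (a, b) := hg (a, b) hne
  have h2 : |a - b| * 2 ^ g (a, b) ≤ |a - b| * 2 ^ (T ×ˢ T).sup g := by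
    apply mul_le_mul_of_nonneg_left _ (abs_nonneg _)
    exact pow_le_pow_right₀ one_le_two hle
  have h3 : |a * 2 ^ (T ×ˢ T).sup g - b * 2 ^ (T ×ˢ T).sup g| < 1 :=
    Int.abs_sub_lt_one_of_floor_eq_floor hfloor
  rw [← sub_mul, abs_mul, abs_of_pos (by positivity : (0:ℝ) < 2 ^ (T ×ˢ T).sup g)] at h3
  linarith

end MaxUnionAux

open MaxUnionAux

open Classical in
theorem maxUnion_measurable {X : Type*} [MeasurableSpace X] [StandardBorelSpace X] :
    @Measurable _ _ ((countingMS X).prod (countingMS X)) (countingMS X)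
      (fun p : Multiset X × Multiset X => p.1 ∪ p.2) := by
  obtain ⟨f, hf⟩ := exists_measurableEmbedding_real X
  letI mM : MeasurableSpace (Multiset X) := countingMS X
  letI m2 : MeasurableSpace (Multiset X × Multiset X) := (countingMS X).prod (countingMS X)
  apply measurable_generateFrom
  rintro C ⟨E, n, hE, rfl⟩
  have hpre : (fun p : Multiset X × Multiset X => p.1 ∪ p.2) ⁻¹'
        {D : Multiset X | countIn D E = n}
      = (fun p : Multiset X × Multiset X => (countIn (p.1 ∪ p.2) E : ℝ≥0∞)) ⁻¹'
        {((n : ℕ) : ℝ≥0∞)} := by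
    ext p
    simp [Nat.cast_inj]
  rw [hpre]
  have hPmeas : ∀ (m : ℕ) (k : ℤ), MeasurableSet (E ∩ {x | ⌊f x * 2 ^ m⌋ = k}) := by
    intro m k
    exact hE.inter (((hf.measurable.mul_const _).floor) (measurableSet_singleton k))
  have hpart : ∀ m : ℕ, ∀ x : X, ∃! k : ℤ, x ∈ {y : X | ⌊f y * 2 ^ m⌋ = k} :=
    fun m x => ⟨⌊f x * 2 ^ m⌋, rfl, fun k hk => hk.symm⟩
  have key : ∀ p : Multiset X × Multiset X,
      (countIn (p.1 ∪ p.2) E : ℝ≥0∞)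
      = ⨆ m : ℕ, ∑' k : ℤ,
          ((max (countIn p.1 (E ∩ {x | ⌊f x * 2 ^ m⌋ = k}))
            (countIn p.2 (E ∩ {x | ⌊f x * 2 ^ m⌋ = k})) : ℕ) : ℝ≥0∞) := by
    intro p
    apply le_antisymm
    · obtain ⟨M, hM⟩ := exists_separating ((p.1 ∪ p.2).toFinset.image f)
      refine le_iSup_of_le M (le_of_eq ?_)
      rw [← tsum_countIn (p.1 ∪ p.2) E (fun k => {y : X | ⌊f y * 2 ^ M⌋ = k}) (hpart M)]
      apply tsum_congr
      intro k
      congr 1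
      apply countIn_union_of_subsingleton
      intro a ha b hb haS hbS
      apply hf.injective
      apply hM
      · exact Finset.mem_image_of_mem f (Multiset.mem_toFinset.2 ha)
      · exact Finset.mem_image_of_mem f (Multiset.mem_toFinset.2 hb)
      · exact haS.2.trans hbS.2.symm
    · apply iSup_le
      intro m
      rw [← tsum_countIn (p.1 ∪ p.2) E (fun k => {y : X | ⌊f y * 2 ^ m⌋ = k}) (hpart m)]
      apply ENNReal.tsum_le_tsum
      intro k
      exact_mod_cast max_le (countIn_mono Multiset.le_union_left _)
        (countIn_mono Multiset.le_union_right _)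
  have hmeas : Measurable (fun p : Multiset X × Multiset X => (countIn (p.1 ∪ p.2) E : ℝ≥0∞)) := by
    simp only [key]
    apply Measurable.iSup
    intro m
    apply Measurable.ennreal_tsum
    intro k
    apply measurable_from_top.comp
    exact ((measurable_countIn (hPmeas m k)).comp measurable_fst).max
      ((measurable_countIn (hPmeas m k)).comp measurable_snd)
  exact hmeas (measurableSet_singleton _)
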